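/- Let c, k, t be positive integers with c ≥ 6 and k ≥ t+3, and suppose c ≥ 4·log₂ t + 7 or k ≥ 2t+3. Define θ(c,k,z) = (1/(k-z)!)·∏_{i=z}^{k-1} binom((k-i)c, c), g(c,k,t,z) = θ(c,k,z)·binom(z,t)·∏_{j=1}^{z-t}(k-(t+j-1)), and f₀(c,k,t) = (k-t-1)·θ(c,k,t+1) − binom(k-t-1, 2)·θ(c,k,t+2). Then g(c,k,t,t+1)·g(c,k,t,t+2) < f₀(c,k,t)². -/

import Mathlib

open Finset

/-- `UParts c k ℓ S`: `S` is a family of `ℓ` pairwise disjoint `c`-subsets of `[ck]`. -/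
def UParts (c k ℓ : ℕ) (S : Finset (Finset (Fin (c * k)))) : Prop :=
  S.card = ℓ ∧ (∀ e ∈ S, e.card = c) ∧
    ∀ e ∈ S, ∀ f ∈ S, e ≠ f → Disjoint e f

/-- `UPartition c k F`: `F` is a `c`-uniform partition of `[ck]` into `k` blocks. -/
def UPartition (c k : ℕ) (F : Finset (Finset (Fin (c * k)))) : Prop :=
  UParts c k k F ∧ ∀ x : Fin (c * k), ∃ e ∈ F, x ∈ e

/-- Cross `t`-intersecting families: any two members from different families share `≥ t` blocks. -/
def CrossInt (c k t : ℕ) (F G : Finset (Finset (Finset (Fin (c * k))))) : Prop :=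
  ∀ A ∈ F, ∀ B ∈ G, t ≤ (A ∩ B).card

/-- `S` is a `t`-cover of the family `F`: a family of pairwise disjoint `c`-subsets meeting
every member of `F` in at least `t` blocks. -/
def IsTCover (c k t : ℕ) (F : Finset (Finset (Finset (Fin (c * k)))))
    (S : Finset (Finset (Fin (c * k)))) : Prop :=
  UParts c k S.card S ∧ ∀ A ∈ F, t ≤ (S ∩ A).card

/-- The `t`-covering number: minimum size of a `t`-cover. -/
noncomputable def tau (c k t : ℕ) (F : Finset (Finset (Finset (Fin (c * k))))) : ℕ :=
  sInf {s | ∃ S, IsTCover c k t F S ∧ S.card = s}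

/-- `θ(c,k,z) = (1/(k-z)!) · ∏_{i=z}^{k-1} C((k-i)c, c)`. -/
def theta (c k z : ℕ) : ℚ :=
  (1 / ((k - z).factorial : ℚ)) * ∏ i ∈ Finset.Ico z k, ((((k - i) * c).choose c : ℕ) : ℚ)

/-- `g(c,k,t,z) = θ(c,k,z)·C(z,t)·∏_{j=1}^{z-t}(k-(t+j-1))`. -/
def gfun (c k t z : ℕ) : ℚ :=
  theta c k z * ((z.choose t : ℕ) : ℚ) * ∏ j ∈ Finset.Icc 1 (z - t), ((k - (t + j - 1) : ℕ) : ℚ)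

/-- `f₀(c,k,t) = (k-t-1)·θ(c,k,t+1) − C(k-t-1,2)·θ(c,k,t+2)`. -/
def f0 (c k t : ℕ) : ℚ :=
  ((k - t - 1 : ℕ) : ℚ) * theta c k (t + 1) - (((k - t - 1).choose 2 : ℕ) : ℚ) * theta c k (t + 2)

/-- `f₂(c,k,t) = (t+2)·θ(c,k,t+1) − (t+1)(k-t-1)·θ(c,k,t+2)`. -/
def f2q (c k t : ℕ) : ℚ :=
  ((t : ℚ) + 2) * theta c k (t + 1) - ((t : ℚ) + 1) * ((k - t - 1 : ℕ) : ℚ) * theta c k (t + 2)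


lemma aux_prod_bound {m c : ℕ} (hm : 1 ≤ m) (i : ℕ) (hi : i < c) :
    m * (c - i) ≤ m * c - i := by
  have h : m * (c - i) + i ≤ m * c := by
    calc m * (c - i) + i ≤ m * (c - i) + m * i := by
          exact Nat.add_le_add_left (Nat.le_mul_of_pos_left i hm) _
      _ = m * ((c - i) + i) := by ring
      _ = m * c := by rw [Nat.sub_add_cancel hi.le]
  omega

lemma aux_pow_le_choose (m c : ℕ) (hm : 1 ≤ m) : m ^ c ≤ (m * c).choose c := by
  have h1 : m ^ c * c.factorial ≤ (m * c).descFactorial c := by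
    conv_lhs => rw [← Nat.descFactorial_self c]
    rw [Nat.descFactorial_eq_prod_range, Nat.descFactorial_eq_prod_range]
    calc m ^ c * ∏ i ∈ range c, (c - i) = ∏ i ∈ range c, m * (c - i) := by
          rw [Finset.prod_mul_distrib, Finset.prod_const, Finset.card_range]
      _ ≤ ∏ i ∈ range c, (m * c - i) :=
          Finset.prod_le_prod' fun i hi => aux_prod_bound hm i (Finset.mem_range.mp hi)
  rw [Nat.descFactorial_eq_factorial_mul_choose] at h1
  have hfac : 0 < c.factorial := c.factorial_pos
  calc m ^ c = c.factorial * m ^ c / c.factorial := by rw [Nat.mul_div_cancel_left _ hfac]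
    _ ≤ c.factorial * (m * c).choose c / c.factorial := by
        apply Nat.div_le_div_right; rw [mul_comm c.factorial]; exact h1
    _ = (m * c).choose c := Nat.mul_div_cancel_left _ hfac

lemma aux_two_pow_choose (m c : ℕ) (hm : 2 ≤ m) :
    m ^ c * (2 * c).choose c ≤ 2 ^ c * (m * c).choose c := by
  have h1 : m ^ c * (2 * c).descFactorial c ≤ 2 ^ c * (m * c).descFactorial c := by
    rw [Nat.descFactorial_eq_prod_range, Nat.descFactorial_eq_prod_range]
    calc m ^ c * ∏ i ∈ range c, (2 * c - i) = ∏ i ∈ range c, m * (2 * c - i) := by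
          rw [Finset.prod_mul_distrib, Finset.prod_const, Finset.card_range]
      _ ≤ ∏ i ∈ range c, 2 * (m * c - i) := by
          apply Finset.prod_le_prod'
          intro i hi
          have hic : i < c := Finset.mem_range.mp hi
          have h2 : 2 * i ≤ m * i := Nat.mul_le_mul_right i hm
          have h3 : i ≤ 2 * c := by omega
          have h4 : i ≤ m * c := le_trans h3 (Nat.mul_le_mul_right c hm)
          have key : m * (2 * c - i) + m * i = 2 * (m * c) := by
            rw [← Nat.mul_add, Nat.sub_add_cancel h3]; ring
          omega
      _ = 2 ^ c * ∏ i ∈ range c, (m * c - i) := by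
          rw [Finset.prod_mul_distrib, Finset.prod_const, Finset.card_range]
  rw [Nat.descFactorial_eq_factorial_mul_choose, Nat.descFactorial_eq_factorial_mul_choose] at h1
  have hfac : 0 < c.factorial := c.factorial_pos
  refine Nat.le_of_mul_le_mul_left ?_ hfac
  calc c.factorial * (m ^ c * (2*c).choose c) = m ^ c * (c.factorial * (2*c).choose c) := by ring
    _ ≤ 2 ^ c * (c.factorial * (m*c).choose c) := h1
    _ = c.factorial * (2 ^ c * (m*c).choose c) := by ring

lemma aux_lin (e : ℕ) : e + 6 ≤ 8 * 2 ^ e := by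
  induction e with
  | zero => norm_num
  | succ n ih =>
    have h : 1 ≤ 2 ^ n := Nat.one_le_two_pow
    rw [pow_succ]; omega

lemma aux_case1 (c m t : ℕ) (hc : 6 ≤ c) (hm : 2 ≤ m) (ht : 1 ≤ t)
    (hP : 128 * t ^ 4 ≤ 2 ^ c) :
    (t + 1) ^ 2 * (t + 2) * (m + 1) ^ 2 ≤ (m * c).choose c := by
  obtain ⟨e, rfl⟩ : ∃ e, c = e + 6 := ⟨c - 6, by omega⟩
  set P : ℕ := 2 ^ e with hPdef
  have hPpos : 0 < P := Nat.pow_pos (by norm_num)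
  have h2c : (2 : ℕ) ^ (e + 6) = 64 * P := by rw [pow_add, hPdef]; ring
  have hP' : 2 * t ^ 4 ≤ P := by omega
  have hlin : e + 6 ≤ 8 * P := aux_lin e
  have ht3 : 2 * t ^ 3 ≤ P := by
    have : t ^ 3 ≤ t ^ 4 := Nat.pow_le_pow_right ht (by norm_num)
    omega
  have hQ : (t + 1) ^ 2 * (t + 2) * (m + 1) ^ 2 ≤ 48 * (t ^ 3 * m ^ 2) := by
    calc (t + 1) ^ 2 * (t + 2) * (m + 1) ^ 2 ≤ (2 * t) ^ 2 * (3 * t) * (2 * m) ^ 2 := by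
          gcongr <;> omega
      _ = 48 * (t ^ 3 * m ^ 2) := by ring
  -- key chain
  have hmc : P * m ^ 6 ≤ m ^ (e + 6) := by
    rw [pow_add]
    exact Nat.mul_le_mul_right _ (Nat.pow_le_pow_left hm e)
  have hR : 0 < (m * (e + 6)).choose (e + 6) := Nat.choose_pos (Nat.le_mul_of_pos_left _ (by omega))
  have hkey : (t + 1) ^ 2 * (t + 2) * (m + 1) ^ 2 * (2 * (e + 6) * 2 ^ (e + 6))
      ≤ m ^ (e + 6) * 4 ^ (e + 6) := by
    have h4 : (4 : ℕ) ^ (e + 6) = (64 * P) * (64 * P) := by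
      rw [show (4:ℕ) = 2 * 2 from rfl, mul_pow, h2c]
    calc (t + 1) ^ 2 * (t + 2) * (m + 1) ^ 2 * (2 * (e + 6) * 2 ^ (e + 6))
        ≤ (48 * (t ^ 3 * m ^ 2)) * (2 * (8 * P) * (64 * P)) := by
          rw [h2c]; exact Nat.mul_le_mul hQ (by gcongr)
      _ = 49152 * (t ^ 3 * (m ^ 2 * (P * P))) := by ring
      _ ≤ 49152 * (t ^ 3 * (m ^ 2 * (P * P))) := le_refl _
      _ ≤ m ^ (e + 6) * 4 ^ (e + 6) := by
          rw [h4]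
          have step1 : 49152 * (t ^ 3 * (m ^ 2 * (P * P))) ≤ 24576 * (m ^ 2 * (P * P * P)) := by
            calc 49152 * (t ^ 3 * (m ^ 2 * (P * P))) = 24576 * (2 * t ^ 3) * (m ^ 2 * (P * P)) := by ring
              _ ≤ 24576 * P * (m ^ 2 * (P * P)) := by gcongr
              _ = 24576 * (m ^ 2 * (P * P * P)) := by ring
          have hm16 : 16 * m ^ 2 ≤ m ^ 6 := by
            calc 16 * m ^ 2 ≤ m ^ 4 * m ^ 2 := by
                  exact Nat.mul_le_mul_right _ (by calc (16:ℕ) = 2 ^ 4 := by norm_num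
                    _ ≤ m ^ 4 := Nat.pow_le_pow_left hm 4)
              _ = m ^ 6 := by ring
          have step2 : 24576 * (m ^ 2 * (P * P * P)) ≤ m ^ (e + 6) * ((64 * P) * (64 * P)) := by
            calc 24576 * (m ^ 2 * (P * P * P)) = 1536 * (16 * m ^ 2) * (P * P * P) := by ring
              _ ≤ 4096 * (m ^ 6) * (P * P * P) := by
                  exact Nat.mul_le_mul (Nat.mul_le_mul (by norm_num) hm16) (le_refl _)
              _ = (P * m ^ 6) * ((64 * P) * (64 * P)) := by ring
              _ ≤ m ^ (e + 6) * ((64 * P) * (64 * P)) := Nat.mul_le_mul_right _ hmc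
          omega
  -- combine with binomial lower bounds
  have h1 : m ^ (e + 6) * 4 ^ (e + 6) ≤ 2 * (e + 6) * 2 ^ (e + 6) * (m * (e + 6)).choose (e + 6) := by
    have hcb := Nat.four_pow_le_two_mul_self_mul_centralBinom (e + 6) (by omega)
    rw [Nat.centralBinom] at hcb
    calc m ^ (e + 6) * 4 ^ (e + 6) ≤ m ^ (e + 6) * (2 * (e + 6) * (2 * (e + 6)).choose (e + 6)) :=
          Nat.mul_le_mul_left _ hcb
      _ = 2 * (e + 6) * (m ^ (e + 6) * (2 * (e + 6)).choose (e + 6)) := by ring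
      _ ≤ 2 * (e + 6) * (2 ^ (e + 6) * (m * (e + 6)).choose (e + 6)) :=
          Nat.mul_le_mul_left _ (aux_two_pow_choose m (e + 6) hm)
      _ = 2 * (e + 6) * 2 ^ (e + 6) * (m * (e + 6)).choose (e + 6) := by ring
  have hfin : (t + 1) ^ 2 * (t + 2) * (m + 1) ^ 2 * (2 * (e + 6) * 2 ^ (e + 6))
      ≤ (m * (e + 6)).choose (e + 6) * (2 * (e + 6) * 2 ^ (e + 6)) := by
    calc (t + 1) ^ 2 * (t + 2) * (m + 1) ^ 2 * (2 * (e + 6) * 2 ^ (e + 6))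
        ≤ m ^ (e + 6) * 4 ^ (e + 6) := hkey
      _ ≤ 2 * (e + 6) * 2 ^ (e + 6) * (m * (e + 6)).choose (e + 6) := h1
      _ = (m * (e + 6)).choose (e + 6) * (2 * (e + 6) * 2 ^ (e + 6)) := by ring
  exact Nat.le_of_mul_le_mul_right hfin (by positivity)

lemma aux_case2 (c m t : ℕ) (hc : 6 ≤ c) (hmt : t + 2 ≤ m) :
    (t + 1) ^ 2 * (t + 2) * (m + 1) ^ 2 ≤ (m * c).choose c := by
  have hm : 2 ≤ m := by omega
  have h5 : (t + 1) ^ 2 * (t + 2) * (m + 1) ^ 2 ≤ m ^ 5 := by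
    calc (t + 1) ^ 2 * (t + 2) * (m + 1) ^ 2 ≤ (m - 1) ^ 2 * m * (m + 1) ^ 2 := by
          gcongr <;> omega
      _ = ((m - 1) * (m + 1)) ^ 2 * m := by ring
      _ ≤ (m * m) ^ 2 * m := by
          have h : (m - 1) * (m + 1) ≤ m * m := by
            obtain ⟨n, rfl⟩ : ∃ n, m = n + 1 := ⟨m - 1, by omega⟩
            simp only [Nat.add_sub_cancel]
            nlinarith
          exact Nat.mul_le_mul_right _ (Nat.pow_le_pow_left h 2)
      _ = m ^ 5 := by ring
  calc (t + 1) ^ 2 * (t + 2) * (m + 1) ^ 2 ≤ m ^ 5 := h5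
    _ ≤ m ^ c := Nat.pow_le_pow_right (by omega) (by omega)
    _ ≤ (m * c).choose c := aux_pow_le_choose m c (by omega)

lemma aux_log_pow (c t : ℕ) (ht : 1 ≤ t) (h : 4 * Real.logb 2 t + 7 ≤ (c : ℝ)) :
    128 * t ^ 4 ≤ 2 ^ c := by
  have htpos : (0 : ℝ) < (t : ℝ) := by exact_mod_cast ht
  have h2 : (1 : ℝ) < 2 := one_lt_two
  have hbase : (2 : ℝ) ^ (Real.logb 2 (t : ℝ)) = (t : ℝ) :=
    Real.rpow_logb (by norm_num) (by norm_num) htpos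
  have hpow : (2 : ℝ) ^ (4 * Real.logb 2 (t : ℝ) + 7) ≤ (2 : ℝ) ^ ((c : ℝ)) := by
    exact Real.rpow_le_rpow_of_exponent_le (by norm_num) h
  have hval : (2 : ℝ) ^ (4 * Real.logb 2 (t : ℝ) + 7) = 128 * (t : ℝ) ^ 4 := by
    rw [Real.rpow_add (by norm_num), mul_comm (4:ℝ), Real.rpow_mul (by norm_num), hbase]
    rw [show ((4:ℝ)) = ((4:ℕ):ℝ) by norm_num, Real.rpow_natCast]
    rw [show ((7:ℝ)) = ((7:ℕ):ℝ) by norm_num, Real.rpow_natCast]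
    norm_num; ring
  have hfin : (128 : ℝ) * (t : ℝ) ^ 4 ≤ (2 : ℝ) ^ c := by
    rw [← hval]
    calc (2 : ℝ) ^ (4 * Real.logb 2 (t:ℝ) + 7) ≤ (2 : ℝ) ^ ((c : ℝ)) := hpow
      _ = (2 : ℝ) ^ c := Real.rpow_natCast 2 c
  exact_mod_cast hfin
lemma theta_pos (c k z : ℕ) : 0 < theta c k z := by
  unfold theta
  apply mul_pos
  · have : (0:ℚ) < ((k - z).factorial : ℚ) := by exact_mod_cast (k - z).factorial_pos
    positivity
  · apply Finset.prod_pos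
    intro i hi
    have hik : i < k := (Finset.mem_Ico.mp hi).2
    have : 0 < ((k - i) * c).choose c := Nat.choose_pos (Nat.le_mul_of_pos_left c (by omega))
    exact_mod_cast this

lemma theta_succ (c k z : ℕ) (hz : z < k) :
    ((k - z : ℕ) : ℚ) * theta c k z = ((((k - z) * c).choose c : ℕ) : ℚ) * theta c k (z + 1) := by
  unfold theta
  rw [Finset.prod_eq_prod_Ico_succ_bot hz]
  have h1 : k - z = (k - (z + 1)) + 1 := by omega
  have hf : ((k - z).factorial : ℚ) = ((k - z : ℕ) : ℚ) * ((k - (z + 1)).factorial : ℚ) := by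
    conv_lhs => rw [h1]
    rw [Nat.factorial_succ, ← h1]
    push_cast; ring
  rw [hf]
  have hne : ((k - z : ℕ) : ℚ) ≠ 0 := Nat.cast_ne_zero.mpr (by omega)
  have hfne : (((k - (z + 1)).factorial : ℕ) : ℚ) ≠ 0 :=
    Nat.cast_ne_zero.mpr (Nat.factorial_pos _).ne'
  field_simp

theorem stmt13 (c k t : ℕ) (hc : 6 ≤ c) (ht : 1 ≤ t) (hk : t + 3 ≤ k)
    (hcond : (4 * Real.logb 2 t + 7 ≤ (c : ℝ)) ∨ 2 * t + 3 ≤ k) :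
    gfun c k t (t + 1) * gfun c k t (t + 2) < (f0 c k t) ^ 2 := by
  set m := k - t - 1 with hmdef
  have hm2 : 2 ≤ m := by omega
  have hkt1 : k - (t + 1) = m := by omega
  have hkt : k - t = m + 1 := by omega
  have hθ1 : (m : ℚ) * theta c k (t + 1) = (((m * c).choose c : ℕ) : ℚ) * theta c k (t + 2) := by
    have h := theta_succ c k (t + 1) (by omega)
    rwa [hkt1] at h
  have hΘpos : 0 < theta c k (t + 2) := theta_pos c k (t + 2)
  have hg1 : gfun c k t (t + 1) = theta c k (t + 1) * ((t : ℚ) + 1) * ((m : ℚ) + 1) := by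
    unfold gfun
    rw [show t + 1 - t = 1 from by omega, Finset.Icc_self, Finset.prod_singleton,
      show t + 1 - 1 = t from by omega, hkt, Nat.choose_succ_self_right]
    push_cast; ring
  have hg2 : gfun c k t (t + 2) =
      theta c k (t + 2) * (((t + 2).choose t : ℕ) : ℚ) * (((m : ℚ) + 1) * (m : ℚ)) := by
    unfold gfun
    rw [show t + 2 - t = 2 from by omega,
      show Finset.Icc 1 2 = ({1, 2} : Finset ℕ) from by decide,
      Finset.prod_insert (by norm_num), Finset.prod_singleton,
      show t + 1 - 1 = t from by omega, show t + 2 - 1 = t + 1 from by omega, hkt, hkt1]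
    push_cast; ring
  have hf0 : f0 c k t = ((((m * c).choose c : ℕ) : ℚ) - ((m.choose 2 : ℕ) : ℚ)) *
      theta c k (t + 2) := by
    unfold f0
    rw [← hmdef, hθ1]
    ring
  -- natural number bounds
  have hRpos : 0 < (m * c).choose c := Nat.choose_pos (Nat.le_mul_of_pos_left c (by omega))
  have hQ : (t + 1) ^ 2 * (t + 2) * (m + 1) ^ 2 ≤ (m * c).choose c := by
    rcases hcond with h | h
    · exact aux_case1 c m t hc hm2 ht (aux_log_pow c t ht h)
    · exact aux_case2 c m t hc (by omega)
  have hD4 : 4 * m.choose 2 ≤ (m * c).choose c := by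
    have h1 : m.choose 2 ≤ m * m := by
      rw [Nat.choose_two_right]
      calc m * (m - 1) / 2 ≤ m * (m - 1) := Nat.div_le_self _ _
        _ ≤ m * m := Nat.mul_le_mul_left _ (by omega)
    have h2 : 4 * (m * m) ≤ m ^ 6 := by
      calc 4 * (m * m) = 4 * m ^ 2 := by ring
        _ ≤ m ^ 4 * m ^ 2 := by
            refine Nat.mul_le_mul_right _ ?_
            calc (4 : ℕ) ≤ 2 ^ 4 := by norm_num
              _ ≤ m ^ 4 := Nat.pow_le_pow_left hm2 4
        _ = m ^ 6 := by ring
    have h3 : m ^ 6 ≤ m ^ c := Nat.pow_le_pow_right (by omega) hc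
    have h4 : m ^ c ≤ (m * c).choose c := aux_pow_le_choose m c (by omega)
    omega
  have hD1 : 1 ≤ m.choose 2 := Nat.choose_pos hm2
  have hC2 : 2 * ((t + 2).choose t) = (t + 1) * (t + 2) := by
    have hsymm : (t + 2).choose t = (t + 2).choose 2 := by
      have h := Nat.choose_symm (show 2 ≤ t + 2 by omega)
      rw [show t + 2 - 2 = t from by omega] at h
      exact h
    have hev : 2 ∣ (t + 1) * (t + 2) := (Nat.even_mul_succ_self (t + 1)).two_dvd
    rw [hsymm, Nat.choose_two_right, show t + 2 - 1 = t + 1 from by omega,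
      mul_comm (t + 2) (t + 1)]
    omega
  -- rational versions
  have hQq : ((t : ℚ) + 1) ^ 2 * ((t : ℚ) + 2) * ((m : ℚ) + 1) ^ 2
      ≤ (((m * c).choose c : ℕ) : ℚ) := by exact_mod_cast hQ
  have hD4q : 4 * ((m.choose 2 : ℕ) : ℚ) ≤ (((m * c).choose c : ℕ) : ℚ) := by exact_mod_cast hD4
  have hD1q : 1 ≤ ((m.choose 2 : ℕ) : ℚ) := by exact_mod_cast hD1
  have hRq : (0 : ℚ) < (((m * c).choose c : ℕ) : ℚ) := by exact_mod_cast hRpos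
  have hC2q : 2 * (((t + 2).choose t : ℕ) : ℚ) = ((t : ℚ) + 1) * ((t : ℚ) + 2) := by
    exact_mod_cast hC2
  have core : (((m * c).choose c : ℕ) : ℚ) * ((t : ℚ) + 1) * ((m : ℚ) + 1) ^ 2
        * (((t + 2).choose t : ℕ) : ℚ)
      < ((((m * c).choose c : ℕ) : ℚ) - ((m.choose 2 : ℕ) : ℚ)) ^ 2 := by
    set Rq : ℚ := (((m * c).choose c : ℕ) : ℚ)
    set Dq : ℚ := ((m.choose 2 : ℕ) : ℚ)
    set Cq : ℚ := (((t + 2).choose t : ℕ) : ℚ)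
    nlinarith [mul_le_mul_of_nonneg_left hQq hRq.le,
      mul_nonneg hRq.le (by linarith : (0:ℚ) ≤ Rq - 4 * Dq),
      mul_le_mul hD1q hD1q (by norm_num) (by linarith),
      mul_le_mul_of_nonneg_left hC2q.le hRq.le, hC2q, hRq]
  have hmq : (0 : ℚ) < (m : ℚ) := by exact_mod_cast (show 0 < m by omega)
  rw [hg1, hg2, hf0, ← mul_lt_mul_iff_right₀ hmq]
  calc (m : ℚ) * (theta c k (t + 1) * ((t : ℚ) + 1) * ((m : ℚ) + 1) *
        (theta c k (t + 2) * (((t + 2).choose t : ℕ) : ℚ) * (((m : ℚ) + 1) * (m : ℚ))))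
      = ((m : ℚ) * theta c k (t + 1)) * (((t : ℚ) + 1) * ((m : ℚ) + 1) ^ 2 *
          (((t + 2).choose t : ℕ) : ℚ) * theta c k (t + 2) * (m : ℚ)) := by ring
    _ = ((((m * c).choose c : ℕ) : ℚ) * theta c k (t + 2)) * (((t : ℚ) + 1) * ((m : ℚ) + 1) ^ 2 *
          (((t + 2).choose t : ℕ) : ℚ) * theta c k (t + 2) * (m : ℚ)) := by rw [hθ1]
    _ = ((m : ℚ) * theta c k (t + 2) ^ 2) * ((((m * c).choose c : ℕ) : ℚ) * ((t : ℚ) + 1) *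
          ((m : ℚ) + 1) ^ 2 * (((t + 2).choose t : ℕ) : ℚ)) := by ring
    _ < ((m : ℚ) * theta c k (t + 2) ^ 2) *
          (((((m * c).choose c : ℕ) : ℚ) - ((m.choose 2 : ℕ) : ℚ)) ^ 2) := by
        exact mul_lt_mul_of_pos_left core (by positivity)
    _ = (m : ℚ) * ((((((m * c).choose c : ℕ) : ℚ) - ((m.choose 2 : ℕ) : ℚ)) *
          theta c k (t + 2)) ^ 2) := by ring
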